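/- Define T(n) = Σ_{j=0}^{2n} (-3)ʲ · C(3n-j, n) for nonnegative integers n. Then for every nonnegative integer n, -27·T(n) + 4·T(n+1) = -3 · (3n+1)! / ((2n+1)! · (n+1)!), where the identity is stated in the rationals ℚ. -/

import Mathlib

noncomputable def Gc (n k : ℕ) : ℚ :=
  (-3) ^ (2*n+2-k) *
    ((-3) * (k:ℚ)^3 + (12*(n:ℚ)+3) * (k:ℚ)^2 + (-12*(n:ℚ)^2+24*(n:ℚ)+30) * (k:ℚ) + 24 - 24*(n:ℚ)^2) *
    (Nat.factorial (n+k) : ℚ) / (9 * (Nat.factorial (n+1) : ℚ) * (Nat.factorial (k+2) : ℚ))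

lemma Gc_step (n k : ℕ) (hk : k ≤ 2*n) :
    Gc n (k+1) - Gc n k =
      -27 * ((-3:ℚ)^(2*n-k) * (Nat.choose (n+k) n : ℚ))
      + 4 * ((-3:ℚ)^(2*n-k) * (Nat.choose (n+k+3) (n+1) : ℚ)) := by
  have e1 : 2*n+2-(k+1) = (2*n-k)+1 := by omega
  have e2 : 2*n+2-k = (2*n-k)+2 := by omega
  have hc1 : (Nat.choose (n+k) n : ℚ) = (Nat.factorial (n+k) : ℚ) / ((Nat.factorial n : ℚ) * (Nat.factorial k : ℚ)) := by
    rw [Nat.cast_add_choose]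
  have hc2 : (Nat.choose (n+k+3) (n+1) : ℚ) = (Nat.factorial (n+k+3) : ℚ) / ((Nat.factorial (n+1) : ℚ) * (Nat.factorial (k+2) : ℚ)) := by
    have h : n+k+3 = (n+1)+(k+2) := by omega
    rw [h, Nat.cast_add_choose]
  have f1 : (Nat.factorial (n+k+1) : ℚ) = ((n:ℚ)+k+1) * (Nat.factorial (n+k) : ℚ) := by
    rw [show n+k+1 = (n+k)+1 from rfl, Nat.factorial_succ]; push_cast; ring
  have f2 : (Nat.factorial (n+k+3) : ℚ) = ((n:ℚ)+k+3)*((n:ℚ)+k+2)*((n:ℚ)+k+1) * (Nat.factorial (n+k) : ℚ) := by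
    rw [show n+k+3 = ((n+k)+1)+1+1 from rfl, Nat.factorial_succ, Nat.factorial_succ, Nat.factorial_succ]
    push_cast; ring
  have f3 : (Nat.factorial (k+3) : ℚ) = ((k:ℚ)+3) * (Nat.factorial (k+2) : ℚ) := by
    rw [show k+3 = (k+2)+1 from rfl, Nat.factorial_succ]; push_cast; ring
  have f4 : (Nat.factorial (k+2) : ℚ) = ((k:ℚ)+2)*((k:ℚ)+1) * (Nat.factorial k : ℚ) := by
    rw [Nat.factorial_succ, Nat.factorial_succ]; push_cast; ring
  have f5 : (Nat.factorial (n+1) : ℚ) = ((n:ℚ)+1) * (Nat.factorial n : ℚ) := by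
    rw [Nat.factorial_succ]; push_cast; ring
  have hnf : (Nat.factorial n : ℚ) ≠ 0 := by exact_mod_cast Nat.factorial_ne_zero n
  have hkf : (Nat.factorial k : ℚ) ≠ 0 := by exact_mod_cast Nat.factorial_ne_zero k
  have hnkf : (Nat.factorial (n+k) : ℚ) ≠ 0 := by exact_mod_cast Nat.factorial_ne_zero (n+k)
  unfold Gc
  rw [e1, e2, hc1, hc2, f2, show n+(k+1) = n+k+1 from by omega, f1, show k+1+2 = k+3 from rfl, f3, f4, f5, pow_succ, pow_succ]
  have h1 : ((n:ℚ)+1) ≠ 0 := by positivity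
  have h2 : ((k:ℚ)+1) ≠ 0 := by positivity
  have h3 : ((k:ℚ)+2) ≠ 0 := by positivity
  have h4 : ((k:ℚ)+3) ≠ 0 := by positivity
  field_simp
  push_cast
  ring

lemma neg_three_sq (n : ℕ) : ((-3:ℚ))^(2*n) = 9^n := by
  rw [pow_mul]; norm_num

lemma Gc_zero (n : ℕ) : Gc n 0 = 12 * (1 - (n:ℚ)) * 9^n := by
  unfold Gc
  have h5 : (Nat.factorial (n+1) : ℚ) = ((n:ℚ)+1) * (Nat.factorial n : ℚ) := by
    rw [Nat.factorial_succ]; push_cast; ring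
  have hnf : (Nat.factorial n : ℚ) ≠ 0 := by exact_mod_cast Nat.factorial_ne_zero n
  have h1 : ((n:ℚ)+1) ≠ 0 := by positivity
  rw [show 2*n+2-0 = 2*n+2 from rfl, show n+0 = n from rfl, pow_add, neg_three_sq, h5]
  have : (Nat.factorial (0+2) : ℚ) = 2 := by norm_num [Nat.factorial]
  rw [this]
  push_cast
  field_simp
  ring

lemma Gc_top (n : ℕ) : Gc n (2*n+1) =
    -3 * (Nat.factorial (3*n+1) : ℚ) / ((Nat.factorial (2*n+1) : ℚ) * (Nat.factorial (n+1) : ℚ)) := by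
  unfold Gc
  have e : 2*n+2-(2*n+1) = 1 := by omega
  have en : n+(2*n+1) = 3*n+1 := by omega
  have f1 : (Nat.factorial (2*n+1+2) : ℚ) = (2*(n:ℚ)+3)*(2*(n:ℚ)+2) * (Nat.factorial (2*n+1) : ℚ) := by
    rw [show 2*n+1+2 = ((2*n+1)+1)+1 from rfl, Nat.factorial_succ, Nat.factorial_succ]
    push_cast; ring
  have f5 : (Nat.factorial (n+1) : ℚ) = ((n:ℚ)+1) * (Nat.factorial n : ℚ) := by
    rw [Nat.factorial_succ]; push_cast; ring
  have hnf : (Nat.factorial n : ℚ) ≠ 0 := by exact_mod_cast Nat.factorial_ne_zero n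
  have h2f : (Nat.factorial (2*n+1) : ℚ) ≠ 0 := by exact_mod_cast Nat.factorial_ne_zero (2*n+1)
  have h1 : ((n:ℚ)+1) ≠ 0 := by positivity
  have h2 : (2*(n:ℚ)+3) ≠ 0 := by positivity
  have h3 : (2*(n:ℚ)+2) ≠ 0 := by positivity
  rw [e, en, f1, f5]
  push_cast
  field_simp
  ring

theorem ruehr_T_recurrence (T : ℕ → ℚ)
    (hT : ∀ n : ℕ, T n = ∑ j ∈ Finset.range (2 * n + 1), (-3 : ℚ) ^ j * (Nat.choose (3 * n - j) n : ℚ)) :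
    ∀ n : ℕ, -27 * T n + 4 * T (n + 1) =
      -3 * (Nat.factorial (3 * n + 1) : ℚ) /
        ((Nat.factorial (2 * n + 1) : ℚ) * (Nat.factorial (n + 1) : ℚ)) := by
  intro n
  have h1 : T n = ∑ k ∈ Finset.range (2*n+1), (-3:ℚ)^(2*n-k) * (Nat.choose (n+k) n : ℚ) := by
    rw [hT n, ← Finset.sum_range_reflect]
    apply Finset.sum_congr rfl
    intro k hk
    simp only [Finset.mem_range] at hk
    rw [show 2*n+1-1-k = 2*n-k from by omega, show 3*n-(2*n-k) = n+k from by omega]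
  have h2 : T (n+1) = (∑ k ∈ Finset.range (2*n+1), (-3:ℚ)^(2*n-k) * (Nat.choose (n+k+3) (n+1) : ℚ))
      + (-3:ℚ)^(2*n+1) * ((n:ℚ)+2) + 9^(n+1) := by
    rw [hT (n+1), ← Finset.sum_range_reflect]
    have hcongr : ∀ k ∈ Finset.range (2*(n+1)+1),
        (fun j => (-3:ℚ)^j * (Nat.choose (3*(n+1)-j) (n+1) : ℚ)) (2*(n+1)+1-1-k)
          = (-3:ℚ)^(2*n+2-k) * (Nat.choose (n+1+k) (n+1) : ℚ) := by
      intro k hk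
      simp only [Finset.mem_range] at hk
      simp only []
      rw [show 2*(n+1)+1-1-k = 2*n+2-k from by omega,
          show 3*(n+1)-(2*n+2-k) = n+1+k from by omega]
    rw [Finset.sum_congr rfl hcongr]
    rw [show 2*(n+1)+1 = (2*n+2)+1 from rfl, Finset.sum_range_succ',
        Finset.sum_range_succ']
    have hterm : ∀ k, k ∈ Finset.range (2*n+1) →
        (-3:ℚ)^(2*n+2-(k+1+1)) * (Nat.choose (n+1+(k+1+1)) (n+1) : ℚ)
          = (-3:ℚ)^(2*n-k) * (Nat.choose (n+k+3) (n+1) : ℚ) := by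
      intro k hk
      rw [show 2*n+2-(k+1+1) = 2*n-k from by omega, show n+1+(k+1+1) = n+k+3 from by omega]
    rw [Finset.sum_congr rfl hterm]
    rw [show 2*n+2-(0+1) = 2*n+1 from by omega, show n+1+(0+1) = n+2 from by omega,
        show 2*n+2-0 = 2*(n+1) from by omega, show n+1+0 = n+1 from rfl]
    rw [Nat.choose_self, Nat.choose_succ_self_right, neg_three_sq]
    push_cast
    ring
  have key : ∑ k ∈ Finset.range (2*n+1), (Gc n (k+1) - Gc n k) = Gc n (2*n+1) - Gc n 0 :=
    Finset.sum_range_sub (Gc n) (2*n+1)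
  have hsum : ∑ k ∈ Finset.range (2*n+1),
      (-27 * ((-3:ℚ)^(2*n-k) * (Nat.choose (n+k) n : ℚ))
        + 4 * ((-3:ℚ)^(2*n-k) * (Nat.choose (n+k+3) (n+1) : ℚ)))
      = Gc n (2*n+1) - Gc n 0 := by
    rw [← key]
    apply Finset.sum_congr rfl
    intro k hk
    simp only [Finset.mem_range] at hk
    exact (Gc_step n k (by omega)).symm
  have expand : -27 * T n + 4 * T (n+1)
      = (∑ k ∈ Finset.range (2*n+1),
          (-27 * ((-3:ℚ)^(2*n-k) * (Nat.choose (n+k) n : ℚ))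
            + 4 * ((-3:ℚ)^(2*n-k) * (Nat.choose (n+k+3) (n+1) : ℚ))))
        + 4 * ((-3:ℚ)^(2*n+1) * ((n:ℚ)+2)) + 4 * 9^(n+1) := by
    rw [h1, h2, Finset.sum_add_distrib, ← Finset.mul_sum, ← Finset.mul_sum]
    ring
  rw [expand, hsum, Gc_top, Gc_zero, show 2*n+1 = 2*n+1 from rfl, pow_succ ((-3:ℚ)) (2*n),
      neg_three_sq, pow_succ (9:ℚ) n]
  ring
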